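/- For every a ∈ ℤ_p, the series (1+X)^a := Σ_{n≥0} binom(a, n) X^n is a well-defined element of ℤ_p[[X]] (each coefficient binom(a,n) lies in ℤ_p), it is a unit of ℤ_p[[X]], and the map a ↦ (1+X)^a is a group homomorphism from (ℤ_p, +) to the unit group ℤ_p[[X]]^×, i.e. (1+X)^{a+b} = (1+X)^a·(1+X)^b for all a, b ∈ ℤ_p. -/

import Mathlib

open Finset

variable (p : ℕ) [Fact p.Prime]

/-- The generalized binomial coefficient `binom(a, n) = a(a−1)⋯(a−n+1)/n!` in `ℚ_p`. -/
noncomputable def padicBinom (a : ℤ_[p]) (n : ℕ) : ℚ_[p] :=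
  (∏ i ∈ Finset.range n, ((a : ℚ_[p]) - (i : ℚ_[p]))) / (n.factorial : ℚ_[p])

/-- The binomial coefficient as an element of `ℤ_p` (defined to be `0` if it were not
integral; the theorem below asserts it really is integral). -/
noncomputable def padicIntBinom (a : ℤ_[p]) (n : ℕ) : ℤ_[p] :=
  if h : ‖padicBinom p a n‖ ≤ 1 then ⟨padicBinom p a n, h⟩ else 0

/-- The power series `(1+X)^a = Σ_{n≥0} binom(a,n) Xⁿ` over `ℤ_p`. -/
noncomputable def onePlusXPow (a : ℤ_[p]) : PowerSeries ℤ_[p] :=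
  PowerSeries.mk (padicIntBinom p a)

lemma prod_range_cast_sub {R : Type*} [CommRing R] (m n : ℕ) :
    ∏ i ∈ Finset.range n, ((m : R) - (i : R)) = (m.descFactorial n : R) := by
  induction n with
  | zero => simp
  | succ n ih =>
    rw [Finset.prod_range_succ, ih, Nat.descFactorial_succ, Nat.cast_mul]
    rcases le_or_gt n m with h | h
    · rw [Nat.cast_sub h]; ring
    · rw [Nat.descFactorial_eq_zero_iff_lt.mpr h]; simp

lemma padicBinom_nat (m n : ℕ) : padicBinom p (m : ℤ_[p]) n = (m.choose n : ℚ_[p]) := by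
  have : ((m : ℤ_[p]) : ℚ_[p]) = (m : ℚ_[p]) := by push_cast; ring
  rw [padicBinom, this, prod_range_cast_sub, Nat.descFactorial_eq_factorial_mul_choose,
    Nat.cast_mul]
  have hf : (n.factorial : ℚ_[p]) ≠ 0 := by exact_mod_cast n.factorial_ne_zero
  field_simp

lemma padicBinom_continuous (n : ℕ) : Continuous (fun a : ℤ_[p] => padicBinom p a n) := by
  unfold padicBinom
  apply Continuous.div_const
  exact continuous_finset_prod _ fun i _ => (continuous_subtype_val).sub continuous_const

lemma norm_padicBinom_le (a : ℤ_[p]) (n : ℕ) : ‖padicBinom p a n‖ ≤ 1 := by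
  have hcl : IsClosed {x : ℤ_[p] | ‖padicBinom p x n‖ ≤ 1} :=
    isClosed_le ((padicBinom_continuous p n).norm) continuous_const
  have hsub : Set.range (Nat.cast : ℕ → ℤ_[p]) ⊆ {x : ℤ_[p] | ‖padicBinom p x n‖ ≤ 1} := by
    rintro _ ⟨m, rfl⟩
    simp only [Set.mem_setOf_eq, padicBinom_nat]
    have : ((m.choose n : ℤ) : ℚ_[p]) = ((m.choose n : ℕ) : ℚ_[p]) := by push_cast; ring
    rw [← this]
    exact Padic.norm_int_le_one _
  have := (PadicInt.denseRange_natCast (p := p)).closure_eq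
  have : a ∈ closure (Set.range (Nat.cast : ℕ → ℤ_[p])) := by rw [this]; trivial
  exact hcl.closure_subset_iff.mpr hsub this

lemma padicBinom_add (a b : ℤ_[p]) (n : ℕ) :
    padicBinom p (a + b) n =
      ∑ ij ∈ Finset.HasAntidiagonal.antidiagonal n, padicBinom p a ij.1 * padicBinom p b ij.2 := by
  have hd : DenseRange (Prod.map (Nat.cast : ℕ → ℤ_[p]) (Nat.cast : ℕ → ℤ_[p])) :=
    (PadicInt.denseRange_natCast).prodMap PadicInt.denseRange_natCast
  have key : (fun x : ℤ_[p] × ℤ_[p] => padicBinom p (x.1 + x.2) n) =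
      fun x : ℤ_[p] × ℤ_[p] =>
        ∑ ij ∈ Finset.HasAntidiagonal.antidiagonal n, padicBinom p x.1 ij.1 * padicBinom p x.2 ij.2 := by
    refine hd.equalizer ((padicBinom_continuous p n).comp (continuous_fst.add continuous_snd))
      (continuous_finset_sum _ fun ij _ =>
        ((padicBinom_continuous p ij.1).comp continuous_fst).mul
          ((padicBinom_continuous p ij.2).comp continuous_snd)) ?_
    funext x
    obtain ⟨m, k⟩ := x
    simp only [Function.comp_apply, Prod.map_apply]
    have : ((m : ℤ_[p]) + (k : ℤ_[p])) = ((m + k : ℕ) : ℤ_[p]) := by push_cast; ring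
    rw [this, padicBinom_nat, Nat.add_choose_eq]
    push_cast
    exact Finset.sum_congr rfl fun ij _ => by rw [padicBinom_nat, padicBinom_nat]
  exact congrFun key (a, b)

lemma padicIntBinom_coe (a : ℤ_[p]) (n : ℕ) :
    ((padicIntBinom p a n : ℚ_[p])) = padicBinom p a n := by
  have h := norm_padicBinom_le p a n
  unfold padicIntBinom
  exact (congrArg (fun x : ℤ_[p] => (x : ℚ_[p])) (dif_pos h)).trans rfl

lemma onePlusXPow_add (a b : ℤ_[p]) :
    onePlusXPow p (a + b) = onePlusXPow p a * onePlusXPow p b := by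
  ext n
  apply Subtype.coe_injective
  show ((PowerSeries.coeff (R := ℤ_[p]) n (onePlusXPow p (a + b)) : ℚ_[p])) =
    ((PowerSeries.coeff (R := ℤ_[p]) n (onePlusXPow p a * onePlusXPow p b) : ℚ_[p]))
  rw [onePlusXPow, PowerSeries.coeff_mk, padicIntBinom_coe, padicBinom_add,
    PowerSeries.coeff_mul]
  simp only [onePlusXPow, PowerSeries.coeff_mk]
  rw [show ((∑ x ∈ Finset.HasAntidiagonal.antidiagonal n, padicIntBinom p a x.1 * padicIntBinom p b x.2 : ℤ_[p]) : ℚ_[p])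
      = ∑ x ∈ Finset.HasAntidiagonal.antidiagonal n, ((padicIntBinom p a x.1 : ℚ_[p]) * (padicIntBinom p b x.2 : ℚ_[p]))
    from by
      refine (map_sum (PadicInt.Coe.ringHom (p := p)) _ _).trans ?_
      exact Finset.sum_congr rfl fun ij _ => map_mul _ _ _]
  exact Finset.sum_congr rfl fun ij _ => by
    rw [padicIntBinom_coe, padicIntBinom_coe]

lemma onePlusXPow_zero : onePlusXPow p 0 = 1 := by
  ext n
  rw [onePlusXPow, PowerSeries.coeff_mk, PowerSeries.coeff_one]
  apply Subtype.coe_injective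
  show ((padicIntBinom p 0 n : ℚ_[p])) = (((if n = 0 then 1 else 0) : ℤ_[p]) : ℚ_[p])
  rw [padicIntBinom_coe]
  cases n with
  | zero => simp [padicBinom]
  | succ k =>
    have h0 : ((0 : ℤ_[p]) : ℚ_[p]) - ((0 : ℕ) : ℚ_[p]) = 0 := by push_cast; ring
    simp only [padicBinom]
    rw [Finset.prod_eq_zero (Finset.mem_range.mpr (Nat.succ_pos k)) h0]
    simp

/-- For every `a ∈ ℤ_p`: the coefficients of `(1+X)^a` are the genuine binomial
coefficients (in particular `binom(a,n) ∈ ℤ_p`), `(1+X)^a` is a unit of `ℤ_p[[X]]`,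
and `a ↦ (1+X)^a` is a homomorphism from `(ℤ_p, +)` to `ℤ_p[[X]]ˣ`. -/
theorem stmt3 :
    (∀ (a : ℤ_[p]) (n : ℕ), ((padicIntBinom p a n : ℚ_[p])) = padicBinom p a n) ∧
    (∀ a : ℤ_[p], IsUnit (onePlusXPow p a)) ∧
    (∀ a b : ℤ_[p], onePlusXPow p (a + b) = onePlusXPow p a * onePlusXPow p b) := by
  refine ⟨padicIntBinom_coe p, fun a => ?_, onePlusXPow_add p⟩
  exact IsUnit.of_mul_eq_one (onePlusXPow p (-a))
    (by rw [← onePlusXPow_add, add_neg_cancel, onePlusXPow_zero])
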